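/- Let 0 < α < β < ∞ and let b̄ : ℝ → ℝ be continuous, nonnegative, with b̄(a) = 0 for a ∉ [α,β]; set r = ∫_α^β b̄(c) dc. Let B : [0,∞) → ℝ be nonnegative and satisfy B(t) = ∫_α^β b̄(c)·B(t−c) dc for all t ≥ β, and suppose c₁ ≤ B(s) ≤ c₂ for all s ∈ [0,β] with c₁ ≥ 0. Then for all t ≥ 0: if r ≥ 1 then B(t) ≥ c₁·r^{⌊t/β⌋}, and if r ≤ 1 then B(t) ≤ c₂·r^{⌊t/β⌋}. In particular the newborn density grows (or decays) asymptotically like r^{t/β}. -/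

import Mathlib

open MeasureTheory Real Set

/-- geometric growth/decay bounds for the nonnegative solution of
the homogeneous renewal equation: if `c₁ ≤ B ≤ c₂` on `[0,β]` with `c₁ ≥ 0`,
then for all `t ≥ 0`, `B(t) ≥ c₁·r^⌊t/β⌋` when `r ≥ 1`, and
`B(t) ≤ c₂·r^⌊t/β⌋` when `r ≤ 1`; i.e. the newborn density grows (or decays)
asymptotically like `r^{t/β}`. -/
theorem renewal_geometric_bounds
    (α β : ℝ) (hα : 0 < α) (hαβ : α < β)
    (bbar : ℝ → ℝ) (hbc : Continuous bbar) (hb0 : ∀ a, 0 ≤ bbar a)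
    (hbsupp : ∀ a, a ∉ Set.Icc α β → bbar a = 0)
    (r : ℝ) (hr : r = ∫ c in α..β, bbar c)
    (B : ℝ → ℝ) (hBcont : ContinuousOn B (Set.Ici 0))
    (hBnonneg : ∀ t : ℝ, 0 ≤ t → 0 ≤ B t)
    (hB : ∀ t : ℝ, β ≤ t → B t = ∫ c in α..β, bbar c * B (t - c))
    (c₁ c₂ : ℝ) (hc₁ : 0 ≤ c₁)
    (hbound : ∀ s ∈ Set.Icc (0:ℝ) β, c₁ ≤ B s ∧ B s ≤ c₂) :
    (1 ≤ r → ∀ t : ℝ, 0 ≤ t → c₁ * r ^ (⌊t / β⌋).toNat ≤ B t) ∧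
    (r ≤ 1 → ∀ t : ℝ, 0 ≤ t → B t ≤ c₂ * r ^ (⌊t / β⌋).toNat) := by
  have hβ : 0 < β := hα.trans hαβ
  have hr0 : 0 ≤ r := by
    rw [hr]
    exact intervalIntegral.integral_nonneg hαβ.le (fun x _ => hb0 x)
  have hc₂ : 0 ≤ c₂ := le_trans (hBnonneg 0 le_rfl) (hbound 0 ⟨le_rfl, hβ.le⟩).2
  have hIint : ∀ t : ℝ, β ≤ t →
      IntervalIntegrable (fun c => bbar c * B (t - c)) volume α β := by
    intro t ht
    apply ContinuousOn.intervalIntegrable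
    rw [Set.uIcc_of_le hαβ.le]
    apply hbc.continuousOn.mul
    apply hBcont.comp (continuous_const.sub continuous_id).continuousOn
    intro c hc
    simp only [Set.mem_Ici, id_eq]
    have : c ≤ β := hc.2
    show (0:ℝ) ≤ t - c
    linarith
  have hbint : IntervalIntegrable bbar volume α β := hbc.intervalIntegrable α β
  have key : ∀ n : ℕ, ∀ t : ℝ, 0 ≤ t → t < β + n * α →
      (1 ≤ r → c₁ * r ^ (⌊t / β⌋).toNat ≤ B t) ∧
      (r ≤ 1 → B t ≤ c₂ * r ^ (⌊t / β⌋).toNat) := by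
    intro n
    induction n with
    | zero =>
      intro t ht0 htlt
      have htβ : t < β := by simpa using htlt
      have hfl : (⌊t / β⌋).toNat = 0 := by
        have h1 : ⌊t / β⌋ = 0 := by
          rw [Int.floor_eq_zero_iff]
          constructor
          · positivity
          · exact (div_lt_one hβ).2 htβ
        simp [h1]
      rw [hfl]
      simp only [pow_zero, mul_one]
      exact ⟨fun _ => (hbound t ⟨ht0, htβ.le⟩).1, fun _ => (hbound t ⟨ht0, htβ.le⟩).2⟩
    | succ n ih =>
      intro t ht0 htlt
      by_cases htβ : t < β
      · exact ih t ht0 (htβ.trans_le (le_add_of_nonneg_right (by positivity)))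
      push_neg at htβ
      set k := (⌊t / β⌋).toNat with hkdef
      have hk1 : 1 ≤ k := by
        have h1 : (1:ℤ) ≤ ⌊t / β⌋ := Int.le_floor.2 (by
          rw [Int.cast_one, le_div_iff₀ hβ]; linarith)
        omega
      -- facts about points t - c for c ∈ [α, β]
      have hpt : ∀ c ∈ Set.Icc α β, 0 ≤ t - c ∧ t - c < β + n * α ∧
          k - 1 ≤ (⌊(t - c) / β⌋).toNat := by
        intro c hc
        obtain ⟨hcα, hcβ⟩ := hc
        refine ⟨by linarith, by push_cast at htlt ⊢; linarith, ?_⟩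
        have hmono : (⌊t / β⌋ : ℤ) - 1 ≤ ⌊(t - c) / β⌋ := by
          have h2 : (⌊t / β⌋ : ℝ) * β ≤ t := by
            rw [← le_div_iff₀ hβ]; exact Int.floor_le _
          have : (((⌊t / β⌋ : ℤ) - 1 : ℤ) : ℝ) ≤ (t - c) / β := by
            push_cast
            rw [le_div_iff₀ hβ]
            nlinarith
          exact Int.le_floor.2 this
        omega
      have hEq := hB t htβ
      constructor
      · -- lower bound
        intro hr1
        have hptle : ∀ c ∈ Set.Icc α β,
            bbar c * (c₁ * r ^ (k - 1)) ≤ bbar c * B (t - c) := by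
          intro c hc
          obtain ⟨h0, hlt, hfl⟩ := hpt c hc
          have hB1 := (ih (t - c) h0 hlt).1 hr1
          have hpow : r ^ (k - 1) ≤ r ^ (⌊(t - c) / β⌋).toNat :=
            pow_le_pow_right₀ hr1 hfl
          have : c₁ * r ^ (k - 1) ≤ B (t - c) := by
            calc c₁ * r ^ (k - 1) ≤ c₁ * r ^ (⌊(t - c) / β⌋).toNat :=
                  mul_le_mul_of_nonneg_left hpow hc₁
              _ ≤ B (t - c) := hB1
          exact mul_le_mul_of_nonneg_left this (hb0 c)
        have hmono : ∫ c in α..β, bbar c * (c₁ * r ^ (k - 1)) ≤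
            ∫ c in α..β, bbar c * B (t - c) :=
          intervalIntegral.integral_mono_on hαβ.le
            (hbint.mul_const _) (hIint t htβ) hptle
        have hL : ∫ c in α..β, bbar c * (c₁ * r ^ (k - 1)) = c₁ * r ^ k := by
          rw [intervalIntegral.integral_mul_const, ← hr]
          have : r * (c₁ * r ^ (k - 1)) = c₁ * (r ^ (k - 1) * r) := by ring
          rw [this, ← pow_succ]
          congr 2
          omega
        rw [hEq, ← hL]
        exact hmono
      · -- upper bound
        intro hr1
        have hptle : ∀ c ∈ Set.Icc α β,
            bbar c * B (t - c) ≤ bbar c * (c₂ * r ^ (k - 1)) := by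
          intro c hc
          obtain ⟨h0, hlt, hfl⟩ := hpt c hc
          have hB1 := (ih (t - c) h0 hlt).2 hr1
          have hpow : r ^ (⌊(t - c) / β⌋).toNat ≤ r ^ (k - 1) :=
            pow_le_pow_of_le_one hr0 hr1 hfl
          have : B (t - c) ≤ c₂ * r ^ (k - 1) := by
            calc B (t - c) ≤ c₂ * r ^ (⌊(t - c) / β⌋).toNat := hB1
              _ ≤ c₂ * r ^ (k - 1) := mul_le_mul_of_nonneg_left hpow hc₂
          exact mul_le_mul_of_nonneg_left this (hb0 c)
        have hmono : ∫ c in α..β, bbar c * B (t - c) ≤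
            ∫ c in α..β, bbar c * (c₂ * r ^ (k - 1)) :=
          intervalIntegral.integral_mono_on hαβ.le
            (hIint t htβ) (hbint.mul_const _) hptle
        have hL : ∫ c in α..β, bbar c * (c₂ * r ^ (k - 1)) = c₂ * r ^ k := by
          rw [intervalIntegral.integral_mul_const, ← hr]
          have : r * (c₂ * r ^ (k - 1)) = c₂ * (r ^ (k - 1) * r) := by ring
          rw [this, ← pow_succ]
          congr 2
          omega
        rw [hEq, ← hL]
        exact hmono
  constructor
  · intro hr1 t ht0
    obtain ⟨n, hn⟩ := exists_nat_gt (t / α)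
    have : t < β + n * α := by
      have : t < n * α := by
        rw [div_lt_iff₀ hα] at hn
        linarith
      linarith
    exact (key n t ht0 this).1 hr1
  · intro hr1 t ht0
    obtain ⟨n, hn⟩ := exists_nat_gt (t / α)
    have : t < β + n * α := by
      have : t < n * α := by
        rw [div_lt_iff₀ hα] at hn
        linarith
      linarith
    exact (key n t ht0 this).2 hr1
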